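/- Let X and Y be nontrivial real normed spaces. The ℓ1-sum X ⊕_1 Y (the product X × Y equipped with the norm ‖(x, y)‖ = ‖x‖ + ‖y‖) is decomposably octahedral if and only if X is decomposably octahedral or Y is decomposably octahedral. -/
import Mathlib

set_option linter.unusedSectionVars false


/-- Decomposable octahedrality (DOH). -/
def DecomposablyOctahedral (X : Type*) [NormedAddCommGroup X] [NormedSpace ℝ X] : Prop :=
  ∀ E : Finset X, (∀ x ∈ E, ‖x‖ = 1) → ∀ ε : ℝ, 0 < ε → ∃ y : X, ‖y‖ = 1 ∧
    ∀ (n : ℕ) (ys : Fin n → X), ∑ i, ys i = y →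
      ∀ xs : Fin n → X, (∀ i, xs i ∈ E) →
      ∀ a b : Fin n → ℝ, (∀ i, 0 ≤ a i) → (∀ i, 0 ≤ b i) →
        (1 - ε) * ((∑ i, (a i + b i)) + 2) ≤
          ∑ i, (‖a i • xs i + ys i‖ + ‖b i • xs i - ys i‖)


section Aux
variable {X Y : Type*} [NormedAddCommGroup X] [NormedSpace ℝ X]
  [NormedAddCommGroup Y] [NormedSpace ℝ Y]

noncomputable def P (u : X) (v : Y) : WithLp 1 (X × Y) := (WithLp.equiv 1 (X × Y)).symm (u, v)

theorem norm1 (f : WithLp 1 (X × Y)) : ‖f‖ = ‖f.fst‖ + ‖f.snd‖ := by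
  rw [WithLp.prod_norm_eq_add (by norm_num)]; norm_num

theorem sum_fst (n : ℕ) (ys : Fin n → WithLp 1 (X × Y)) :
    (∑ i, ys i).fst = ∑ i, (ys i).fst :=
  map_sum (AddMonoidHom.mk' (fun f : WithLp 1 (X×Y) => f.fst) (fun _ _ => rfl)) ys Finset.univ

/-- a unit vector in a nontrivial normed space -/
theorem exists_unit (X : Type*) [NormedAddCommGroup X] [NormedSpace ℝ X] [Nontrivial X] :
    ∃ e : X, ‖e‖ = 1 := by
  obtain ⟨x, hx⟩ := exists_ne (0 : X)
  exact ⟨‖x‖⁻¹ • x, by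
    rw [norm_smul, norm_inv, norm_norm, inv_mul_cancel₀ (norm_ne_zero_iff.mpr hx)]⟩

theorem normP (u : X) (v : Y) : ‖P u v‖ = ‖u‖ + ‖v‖ := by
  rw [norm1]; rfl



theorem sum_snd (n : ℕ) (ys : Fin n → WithLp 1 (X × Y)) :
    (∑ i, ys i).snd = ∑ i, (ys i).snd :=
  map_sum (AddMonoidHom.mk' (fun f : WithLp 1 (X×Y) => f.snd) (fun _ _ => rfl)) ys Finset.univ

theorem sum_P_left (n : ℕ) (f : Fin n → X) : ∑ i, P (f i) (0:Y) = P (∑ i, f i) 0 :=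
  (map_sum (AddMonoidHom.mk' (fun x : X => P x (0:Y))
    (fun x y => by show P (x+y) 0 = P (x+y) (0+0); rw [add_zero])) f Finset.univ).symm

theorem sum_P_right (n : ℕ) (f : Fin n → Y) : ∑ i, P (0:X) (f i) = P 0 (∑ i, f i) :=
  (map_sum (AddMonoidHom.mk' (fun v : Y => P (0:X) v)
    (fun x y => by show P 0 (x+y) = P (0+0) (x+y); rw [add_zero])) f Finset.univ).symm

theorem doh_arith (ε εE t S A w1 : ℝ) (hε2 : ε ≤ εE/2) (hεE : 0 < εE) (ht0 : 0 < t)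
    (ht2 : 1/2 ≤ t) (hS : 0 ≤ S) (hsnd : w1 = 1 - t)
    (key : (1-ε)*(t*S+2) ≤ t*A + 2*w1) (hviol : A < (1-εE)*(S+2)) : False := by
  have h3 : t*A < t*((1-εE)*(S+2)) := mul_lt_mul_of_pos_left hviol ht0
  nlinarith [mul_le_mul_of_nonneg_right (show ε ≤ εE by linarith) (mul_nonneg ht0.le hS),
    mul_le_mul_of_nonneg_left ht2 hεE.le]

theorem doh_converse [Nontrivial X] [Nontrivial Y]
    (h : DecomposablyOctahedral (WithLp 1 (X × Y))) :
    DecomposablyOctahedral X ∨ DecomposablyOctahedral Y := by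
  classical
  by_contra hc
  push_neg at hc
  obtain ⟨hX, hY⟩ := hc
  unfold DecomposablyOctahedral at hX hY
  push_neg at hX hY
  obtain ⟨EX, hEX, εX, hεX, hXv⟩ := hX
  obtain ⟨EY, hEY, εY, hεY, hYv⟩ := hY
  obtain ⟨e, he⟩ := exists_unit X
  set ε : ℝ := min εX εY / 2 with hεdef
  have hε : 0 < ε := by have := lt_min hεX hεY; positivity
  set E : Finset (WithLp 1 (X × Y)) :=
    insert (P e 0) ((EX.image fun x => P x 0) ∪ (EY.image fun v => P 0 v)) with hEdef
  have hE : ∀ f ∈ E, ‖f‖ = 1 := by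
    intro f hf
    rcases Finset.mem_insert.mp hf with rfl | hf
    · rw [normP, he, norm_zero, add_zero]
    rcases Finset.mem_union.mp hf with hf | hf
    · obtain ⟨x, hx, rfl⟩ := Finset.mem_image.mp hf
      rw [normP, hEX x hx, norm_zero, add_zero]
    · obtain ⟨v, hv, rfl⟩ := Finset.mem_image.mp hf
      rw [normP, hEY v hv, norm_zero, zero_add]
  obtain ⟨w, hw, hw2⟩ := h E hE ε hε
  have hw1 : ‖w.fst‖ + ‖w.snd‖ = 1 := by rw [← norm1]; exact hw
  rcases le_or_gt (1/2 : ℝ) ‖w.fst‖ with hcase | hcase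
  · -- use the X-failure
    have ht0 : (0:ℝ) < ‖w.fst‖ := by linarith
    set t : ℝ := ‖w.fst‖ with htdef
    have hunit : ‖t⁻¹ • w.fst‖ = 1 := by
      rw [norm_smul, norm_inv, Real.norm_of_nonneg ht0.le, inv_mul_cancel₀ ht0.ne']
    obtain ⟨n, ys, hys, xs, hxs, a, b, ha, hb, hviol⟩ := hXv (t⁻¹ • w.fst) hunit
    set ys' : Fin (n+1) → WithLp 1 (X × Y) :=
      Fin.snoc (fun i => P (t • ys i) 0) (P 0 w.snd) with hys'def
    set xs' : Fin (n+1) → WithLp 1 (X × Y) :=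
      Fin.snoc (fun i => P (xs i) 0) (P e 0) with hxs'def
    set a' : Fin (n+1) → ℝ := Fin.snoc (fun i => t * a i) 0 with ha'def
    set b' : Fin (n+1) → ℝ := Fin.snoc (fun i => t * b i) 0 with hb'def
    have hsum' : ∑ i, ys' i = w := by
      rw [Fin.sum_univ_castSucc]
      simp only [hys'def, Fin.snoc_castSucc, Fin.snoc_last]
      rw [sum_P_left]
      have hsf : ∑ i, t • ys i = w.fst := by
        rw [← Finset.smul_sum, hys, smul_inv_smul₀ ht0.ne']
      rw [hsf]
      show P (w.fst + 0) (0 + w.snd) = w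
      rw [add_zero, zero_add]
      rfl
    have hxs'mem : ∀ i, xs' i ∈ E := by
      intro i
      refine Fin.lastCases ?_ ?_ i
      · simp only [hxs'def, Fin.snoc_last]; exact Finset.mem_insert_self _ _
      · intro j
        simp only [hxs'def, Fin.snoc_castSucc]
        exact Finset.mem_insert_of_mem (Finset.mem_union_left _
          (Finset.mem_image.mpr ⟨xs j, hxs j, rfl⟩))
    have ha' : ∀ i, 0 ≤ a' i := by
      intro i
      refine Fin.lastCases ?_ ?_ i
      · simp [ha'def]
      · intro j; simp only [ha'def, Fin.snoc_castSucc]; exact mul_nonneg ht0.le (ha j)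
    have hb' : ∀ i, 0 ≤ b' i := by
      intro i
      refine Fin.lastCases ?_ ?_ i
      · simp [hb'def]
      · intro j; simp only [hb'def, Fin.snoc_castSucc]; exact mul_nonneg ht0.le (hb j)
    have key := hw2 (n+1) ys' hsum' xs' hxs'mem a' b' ha' hb'
    have hsumab : ∑ i, (a' i + b' i) = t * ∑ i, (a i + b i) := by
      rw [Fin.sum_univ_castSucc]
      simp only [ha'def, hb'def, Fin.snoc_castSucc, Fin.snoc_last, add_zero]
      rw [Finset.mul_sum]
      exact Finset.sum_congr rfl fun i _ => by ring
    have hRHS : ∑ i, (‖a' i • xs' i + ys' i‖ + ‖b' i • xs' i - ys' i‖) =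
        t * (∑ i, (‖a i • xs i + ys i‖ + ‖b i • xs i - ys i‖)) + 2 * ‖w.snd‖ := by
      rw [Fin.sum_univ_castSucc]
      have hlast : ‖a' (Fin.last n) • xs' (Fin.last n) + ys' (Fin.last n)‖ +
          ‖b' (Fin.last n) • xs' (Fin.last n) - ys' (Fin.last n)‖ = 2 * ‖w.snd‖ := by
        simp only [ha'def, hb'def, hxs'def, hys'def, Fin.snoc_last, zero_smul, zero_add,
          zero_sub, norm_neg, normP, norm_zero]
        ring
      rw [hlast]
      congr 1
      rw [Finset.mul_sum]
      apply Finset.sum_congr rfl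
      intro i _
      simp only [ha'def, hb'def, hxs'def, hys'def, Fin.snoc_castSucc]
      have e1 : (t * a i) • P (xs i) (0:Y) + P (t • ys i) 0 =
          P (t • (a i • xs i + ys i)) 0 := by
        show P ((t * a i) • xs i + t • ys i) ((t * a i) • (0:Y) + 0) = _
        rw [smul_zero, add_zero]
        congr 1
        module
      have e2 : (t * b i) • P (xs i) (0:Y) - P (t • ys i) 0 =
          P (t • (b i • xs i - ys i)) 0 := by
        show P ((t * b i) • xs i - t • ys i) ((t * b i) • (0:Y) - 0) = _
        rw [smul_zero, sub_zero]
        congr 1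
        module
      rw [e1, e2, normP, normP, norm_smul, norm_smul, Real.norm_of_nonneg ht0.le, norm_zero]
      ring
    rw [hsumab, hRHS] at key
    have hsnd : ‖w.snd‖ = 1 - t := by linarith
    have hS : 0 ≤ ∑ i, (a i + b i) :=
      Finset.sum_nonneg fun i _ => add_nonneg (ha i) (hb i)
    have ht1 : t ≤ 1 := by have := norm_nonneg w.snd; linarith
    have hεX' : ε ≤ εX / 2 := by
      rw [hεdef]; have := min_le_left εX εY; linarith
    -- key : (1-ε)*(t*S+2) ≤ t*A + 2‖w.snd‖, hviol : A < (1-εX)*(S+2)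
    exact doh_arith ε εX t _ _ ‖w.snd‖ hεX' hεX ht0 hcase hS hsnd key hviol
  · -- use the Y-failure
    have ht0 : (0:ℝ) < ‖w.snd‖ := by linarith
    set t : ℝ := ‖w.snd‖ with htdef
    have hunit : ‖t⁻¹ • w.snd‖ = 1 := by
      rw [norm_smul, norm_inv, Real.norm_of_nonneg ht0.le, inv_mul_cancel₀ ht0.ne']
    obtain ⟨n, ys, hys, xs, hxs, a, b, ha, hb, hviol⟩ := hYv (t⁻¹ • w.snd) hunit
    set ys' : Fin (n+1) → WithLp 1 (X × Y) :=
      Fin.snoc (fun i => P 0 (t • ys i)) (P w.fst 0) with hys'def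
    set xs' : Fin (n+1) → WithLp 1 (X × Y) :=
      Fin.snoc (fun i => P 0 (xs i)) (P e 0) with hxs'def
    set a' : Fin (n+1) → ℝ := Fin.snoc (fun i => t * a i) 0 with ha'def
    set b' : Fin (n+1) → ℝ := Fin.snoc (fun i => t * b i) 0 with hb'def
    have hsum' : ∑ i, ys' i = w := by
      rw [Fin.sum_univ_castSucc]
      simp only [hys'def, Fin.snoc_castSucc, Fin.snoc_last]
      rw [sum_P_right]
      have hsf : ∑ i, t • ys i = w.snd := by
        rw [← Finset.smul_sum, hys, smul_inv_smul₀ ht0.ne']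
      rw [hsf]
      show P (0 + w.fst) (w.snd + 0) = w
      rw [add_zero, zero_add]
      rfl
    have hxs'mem : ∀ i, xs' i ∈ E := by
      intro i
      refine Fin.lastCases ?_ ?_ i
      · simp only [hxs'def, Fin.snoc_last]; exact Finset.mem_insert_self _ _
      · intro j
        simp only [hxs'def, Fin.snoc_castSucc]
        exact Finset.mem_insert_of_mem (Finset.mem_union_right _
          (Finset.mem_image.mpr ⟨xs j, hxs j, rfl⟩))
    have ha' : ∀ i, 0 ≤ a' i := by
      intro i
      refine Fin.lastCases ?_ ?_ i
      · simp [ha'def]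
      · intro j; simp only [ha'def, Fin.snoc_castSucc]; exact mul_nonneg ht0.le (ha j)
    have hb' : ∀ i, 0 ≤ b' i := by
      intro i
      refine Fin.lastCases ?_ ?_ i
      · simp [hb'def]
      · intro j; simp only [hb'def, Fin.snoc_castSucc]; exact mul_nonneg ht0.le (hb j)
    have key := hw2 (n+1) ys' hsum' xs' hxs'mem a' b' ha' hb'
    have hsumab : ∑ i, (a' i + b' i) = t * ∑ i, (a i + b i) := by
      rw [Fin.sum_univ_castSucc]
      simp only [ha'def, hb'def, Fin.snoc_castSucc, Fin.snoc_last, add_zero]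
      rw [Finset.mul_sum]
      exact Finset.sum_congr rfl fun i _ => by ring
    have hRHS : ∑ i, (‖a' i • xs' i + ys' i‖ + ‖b' i • xs' i - ys' i‖) =
        t * (∑ i, (‖a i • xs i + ys i‖ + ‖b i • xs i - ys i‖)) + 2 * ‖w.fst‖ := by
      rw [Fin.sum_univ_castSucc]
      have hlast : ‖a' (Fin.last n) • xs' (Fin.last n) + ys' (Fin.last n)‖ +
          ‖b' (Fin.last n) • xs' (Fin.last n) - ys' (Fin.last n)‖ = 2 * ‖w.fst‖ := by
        simp only [ha'def, hb'def, hxs'def, hys'def, Fin.snoc_last, zero_smul, zero_add,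
          zero_sub, norm_neg, normP, norm_zero]
        ring
      rw [hlast]
      congr 1
      rw [Finset.mul_sum]
      apply Finset.sum_congr rfl
      intro i _
      simp only [ha'def, hb'def, hxs'def, hys'def, Fin.snoc_castSucc]
      have e1 : (t * a i) • P (0:X) (xs i) + P 0 (t • ys i) =
          P 0 (t • (a i • xs i + ys i)) := by
        show P ((t * a i) • (0:X) + 0) ((t * a i) • xs i + t • ys i) = _
        rw [smul_zero, add_zero]
        congr 1
        module
      have e2 : (t * b i) • P (0:X) (xs i) - P 0 (t • ys i) =
          P 0 (t • (b i • xs i - ys i)) := by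
        show P ((t * b i) • (0:X) - 0) ((t * b i) • xs i - t • ys i) = _
        rw [smul_zero, sub_zero]
        congr 1
        module
      rw [e1, e2, normP, normP, norm_smul, norm_smul, Real.norm_of_nonneg ht0.le, norm_zero]
      ring
    rw [hsumab, hRHS] at key
    have hsnd : ‖w.fst‖ = 1 - t := by linarith
    have hS : 0 ≤ ∑ i, (a i + b i) :=
      Finset.sum_nonneg fun i _ => add_nonneg (ha i) (hb i)
    have ht1 : t ≤ 1 := by have := norm_nonneg w.fst; linarith
    have hεY' : ε ≤ εY / 2 := by
      rw [hεdef]; have := min_le_right εX εY; linarith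
    have ht2 : 1/2 ≤ t := by linarith
    exact doh_arith ε εY t _ _ ‖w.fst‖ hεY' hεY ht0 ht2 hS hsnd key hviol


theorem doh_left [Nontrivial X] (hX : DecomposablyOctahedral X) :
    DecomposablyOctahedral (WithLp 1 (X × Y)) := by
  classical
  obtain ⟨e, he⟩ := exists_unit X
  intro E hE ε hε
  set E' : Finset X :=
    insert e ((E.filter (fun f => f.fst ≠ 0)).image (fun f => ‖f.fst‖⁻¹ • f.fst)) with hE'def
  have hE' : ∀ x ∈ E', ‖x‖ = 1 := by
    intro x hx
    rcases Finset.mem_insert.mp hx with h | h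
    · subst h; exact he
    · obtain ⟨f, hf, rfl⟩ := Finset.mem_image.mp h
      have hf0 : f.fst ≠ 0 := (Finset.mem_filter.mp hf).2
      rw [norm_smul, norm_inv, norm_norm, inv_mul_cancel₀ (norm_ne_zero_iff.mpr hf0)]
  obtain ⟨y, hy, hy2⟩ := hX E' hE' ε hε
  refine ⟨P y 0, by rw [norm1]; simp [P, hy], ?_⟩
  intro n ys hsum xs hxs a b ha hb
  -- projected data
  set u : Fin n → X := fun i => (xs i).fst with hu
  set v : Fin n → Y := fun i => (xs i).snd with hv
  have huv : ∀ i, ‖u i‖ + ‖v i‖ = 1 := fun i => by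
    rw [← norm1]; exact hE _ (hxs i)
  set xs' : Fin n → X := fun i => if h : u i = 0 then e else ‖u i‖⁻¹ • u i with hxs'def
  have hxs' : ∀ i, xs' i ∈ E' := by
    intro i
    by_cases h : u i = 0
    · simp [hxs'def, h, hE'def]
    · simp only [hxs'def, h, dif_neg, not_false_iff]
      exact Finset.mem_insert_of_mem (Finset.mem_image.mpr
        ⟨xs i, Finset.mem_filter.mpr ⟨hxs i, h⟩, rfl⟩)
  set a' : Fin n → ℝ := fun i => a i * ‖u i‖ with ha'
  set b' : Fin n → ℝ := fun i => b i * ‖u i‖ with hb'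
  have hsum1 : ∑ i, (ys i).fst = y := by rw [← sum_fst, hsum]; simp [P]
  have key := hy2 n (fun i => (ys i).fst) hsum1 xs' hxs' a' b'
    (fun i => mul_nonneg (ha i) (norm_nonneg _))
    (fun i => mul_nonneg (hb i) (norm_nonneg _))
  have hsmul : ∀ (c : ℝ), 0 ≤ c → ∀ i, (c * ‖u i‖) • xs' i = c • u i := by
    intro c hc i
    by_cases h : u i = 0
    · simp [hxs'def, h]
    · simp only [hxs'def, h, dif_neg, not_false_iff]
      rw [smul_smul, mul_assoc, mul_inv_cancel₀ (norm_ne_zero_iff.mpr h), mul_one]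
  -- rewrite key
  have keyX : (1 - ε) * ((∑ i, (a i + b i) * ‖u i‖) + 2) ≤
      ∑ i, (‖a i • u i + (ys i).fst‖ + ‖b i • u i - (ys i).fst‖) := by
    calc (1 - ε) * ((∑ i, (a i + b i) * ‖u i‖) + 2)
        = (1 - ε) * ((∑ i, (a' i + b' i)) + 2) := by
          congr 1; congr 1; apply Finset.sum_congr rfl; intros; ring
      _ ≤ ∑ i, (‖a' i • xs' i + (ys i).fst‖ + ‖b' i • xs' i - (ys i).fst‖) := key
      _ = _ := by
          apply Finset.sum_congr rfl; intro i _
          rw [hsmul (a i) (ha i) i, hsmul (b i) (hb i) i]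
  -- Y part bound
  have keyY : ∀ i, (a i + b i) * ‖v i‖ ≤
      ‖a i • v i + (ys i).snd‖ + ‖b i • v i - (ys i).snd‖ := by
    intro i
    have : (a i + b i) * ‖v i‖ = ‖(a i • v i + (ys i).snd) + (b i • v i - (ys i).snd)‖ := by
      rw [show (a i • v i + (ys i).snd) + (b i • v i - (ys i).snd) = (a i + b i) • v i by
        module]
      rw [norm_smul, Real.norm_of_nonneg (add_nonneg (ha i) (hb i))]
    rw [this]; exact norm_add_le _ _
  have keyY' : ∑ i, (a i + b i) * ‖v i‖ ≤
      ∑ i, (‖a i • v i + (ys i).snd‖ + ‖b i • v i - (ys i).snd‖) :=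
    Finset.sum_le_sum fun i _ => keyY i
  -- expand the product norms
  have expand : ∑ i, (‖a i • xs i + ys i‖ + ‖b i • xs i - ys i‖) =
      (∑ i, (‖a i • u i + (ys i).fst‖ + ‖b i • u i - (ys i).fst‖)) +
      (∑ i, (‖a i • v i + (ys i).snd‖ + ‖b i • v i - (ys i).snd‖)) := by
    rw [← Finset.sum_add_distrib]
    apply Finset.sum_congr rfl; intro i _
    rw [norm1 (a i • xs i + ys i), norm1 (b i • xs i - ys i)]
    have h1 : (a i • xs i + ys i).fst = a i • u i + (ys i).fst := rfl
    have h2 : (a i • xs i + ys i).snd = a i • v i + (ys i).snd := rfl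
    have h3 : (b i • xs i - ys i).fst = b i • u i - (ys i).fst := rfl
    have h4 : (b i • xs i - ys i).snd = b i • v i - (ys i).snd := rfl
    rw [h1, h2, h3, h4]; ring
  rw [expand]
  have hsplit : ∑ i, (a i + b i) = (∑ i, (a i + b i) * ‖u i‖) + ∑ i, (a i + b i) * ‖v i‖ := by
    rw [← Finset.sum_add_distrib]
    apply Finset.sum_congr rfl; intro i _
    rw [← mul_add, huv i, mul_one]
  have hSv : 0 ≤ ∑ i, (a i + b i) * ‖v i‖ :=
    Finset.sum_nonneg fun i _ => mul_nonneg (add_nonneg (ha i) (hb i)) (norm_nonneg _)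
  nlinarith [mul_nonneg hε.le hSv]

theorem doh_right [Nontrivial Y] (hY : DecomposablyOctahedral Y) :
    DecomposablyOctahedral (WithLp 1 (X × Y)) := by
  classical
  obtain ⟨e, he⟩ := exists_unit Y
  intro E hE ε hε
  set E' : Finset Y :=
    insert e ((E.filter (fun f => f.snd ≠ 0)).image (fun f => ‖f.snd‖⁻¹ • f.snd)) with hE'def
  have hE' : ∀ x ∈ E', ‖x‖ = 1 := by
    intro x hx
    rcases Finset.mem_insert.mp hx with h | h
    · subst h; exact he
    · obtain ⟨f, hf, rfl⟩ := Finset.mem_image.mp h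
      have hf0 : f.snd ≠ 0 := (Finset.mem_filter.mp hf).2
      rw [norm_smul, norm_inv, norm_norm, inv_mul_cancel₀ (norm_ne_zero_iff.mpr hf0)]
  obtain ⟨y, hy, hy2⟩ := hY E' hE' ε hε
  refine ⟨P 0 y, by rw [norm1]; simp [P, hy], ?_⟩
  intro n ys hsum xs hxs a b ha hb
  set u : Fin n → Y := fun i => (xs i).snd with hu
  set v : Fin n → X := fun i => (xs i).fst with hv
  have huv : ∀ i, ‖v i‖ + ‖u i‖ = 1 := fun i => by
    rw [← norm1]; exact hE _ (hxs i)
  set xs' : Fin n → Y := fun i => if h : u i = 0 then e else ‖u i‖⁻¹ • u i with hxs'def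
  have hxs' : ∀ i, xs' i ∈ E' := by
    intro i
    by_cases h : u i = 0
    · simp [hxs'def, h, hE'def]
    · simp only [hxs'def, h, dif_neg, not_false_iff]
      exact Finset.mem_insert_of_mem (Finset.mem_image.mpr
        ⟨xs i, Finset.mem_filter.mpr ⟨hxs i, h⟩, rfl⟩)
  set a' : Fin n → ℝ := fun i => a i * ‖u i‖ with ha'
  set b' : Fin n → ℝ := fun i => b i * ‖u i‖ with hb'
  have hsum1 : ∑ i, (ys i).snd = y := by rw [← sum_snd, hsum]; simp [P]
  have key := hy2 n (fun i => (ys i).snd) hsum1 xs' hxs' a' b'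
    (fun i => mul_nonneg (ha i) (norm_nonneg _))
    (fun i => mul_nonneg (hb i) (norm_nonneg _))
  have hsmul : ∀ (c : ℝ), 0 ≤ c → ∀ i, (c * ‖u i‖) • xs' i = c • u i := by
    intro c hc i
    by_cases h : u i = 0
    · simp [hxs'def, h]
    · simp only [hxs'def, h, dif_neg, not_false_iff]
      rw [smul_smul, mul_assoc, mul_inv_cancel₀ (norm_ne_zero_iff.mpr h), mul_one]
  have keyX : (1 - ε) * ((∑ i, (a i + b i) * ‖u i‖) + 2) ≤
      ∑ i, (‖a i • u i + (ys i).snd‖ + ‖b i • u i - (ys i).snd‖) := by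
    calc (1 - ε) * ((∑ i, (a i + b i) * ‖u i‖) + 2)
        = (1 - ε) * ((∑ i, (a' i + b' i)) + 2) := by
          congr 1; congr 1; apply Finset.sum_congr rfl; intros; ring
      _ ≤ ∑ i, (‖a' i • xs' i + (ys i).snd‖ + ‖b' i • xs' i - (ys i).snd‖) := key
      _ = _ := by
          apply Finset.sum_congr rfl; intro i _
          rw [hsmul (a i) (ha i) i, hsmul (b i) (hb i) i]
  have keyY : ∀ i, (a i + b i) * ‖v i‖ ≤
      ‖a i • v i + (ys i).fst‖ + ‖b i • v i - (ys i).fst‖ := by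
    intro i
    have : (a i + b i) * ‖v i‖ = ‖(a i • v i + (ys i).fst) + (b i • v i - (ys i).fst)‖ := by
      rw [show (a i • v i + (ys i).fst) + (b i • v i - (ys i).fst) = (a i + b i) • v i by
        module]
      rw [norm_smul, Real.norm_of_nonneg (add_nonneg (ha i) (hb i))]
    rw [this]; exact norm_add_le _ _
  have keyY' : ∑ i, (a i + b i) * ‖v i‖ ≤
      ∑ i, (‖a i • v i + (ys i).fst‖ + ‖b i • v i - (ys i).fst‖) :=
    Finset.sum_le_sum fun i _ => keyY i
  have expand : ∑ i, (‖a i • xs i + ys i‖ + ‖b i • xs i - ys i‖) =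
      (∑ i, (‖a i • u i + (ys i).snd‖ + ‖b i • u i - (ys i).snd‖)) +
      (∑ i, (‖a i • v i + (ys i).fst‖ + ‖b i • v i - (ys i).fst‖)) := by
    rw [← Finset.sum_add_distrib]
    apply Finset.sum_congr rfl; intro i _
    rw [norm1 (a i • xs i + ys i), norm1 (b i • xs i - ys i)]
    have h1 : (a i • xs i + ys i).fst = a i • v i + (ys i).fst := rfl
    have h2 : (a i • xs i + ys i).snd = a i • u i + (ys i).snd := rfl
    have h3 : (b i • xs i - ys i).fst = b i • v i - (ys i).fst := rfl
    have h4 : (b i • xs i - ys i).snd = b i • u i - (ys i).snd := rfl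
    rw [h1, h2, h3, h4]; ring
  rw [expand]
  have hsplit : ∑ i, (a i + b i) = (∑ i, (a i + b i) * ‖u i‖) + ∑ i, (a i + b i) * ‖v i‖ := by
    rw [← Finset.sum_add_distrib]
    apply Finset.sum_congr rfl; intro i _
    rw [← mul_add]
    rw [show ‖u i‖ + ‖v i‖ = 1 by linarith [huv i], mul_one]
  have hSv : 0 ≤ ∑ i, (a i + b i) * ‖v i‖ :=
    Finset.sum_nonneg fun i _ => mul_nonneg (add_nonneg (ha i) (hb i)) (norm_nonneg _)
  nlinarith [mul_nonneg hε.le hSv]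

end Aux

/-- For nontrivial spaces, the ℓ₁-sum `X ⊕₁ Y` (with norm `‖(x, y)‖ = ‖x‖ + ‖y‖`) is DOH
if and only if `X` is DOH or `Y` is DOH. -/
theorem doh_l1_sum_iff (X Y : Type*) [NormedAddCommGroup X] [NormedSpace ℝ X]
    [NormedAddCommGroup Y] [NormedSpace ℝ Y] [Nontrivial X] [Nontrivial Y] :
    DecomposablyOctahedral (WithLp 1 (X × Y)) ↔
      DecomposablyOctahedral X ∨ DecomposablyOctahedral Y := by
  constructor
  · exact doh_converse
  · rintro (hX | hY)
    · exact doh_left hX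
    · exact doh_right hY
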